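/- Let V be a Lorentzian vector space and t ∈ V with ⟨t,t⟩ > 0. Then for all u, v in the causal future cone C_t⁺(V) = {x : ⟨x,x⟩ ≥ 0, ⟨x,t⟩ ≥ 0}, the reverse Cauchy–Schwarz inequality ⟨u,v⟩ ≥ √⟨u,u⟩ · √⟨v,v⟩ holds. -/
import Mathlib


/-- A symmetric bilinear form `B` on a real vector space `V` is Lorentzian if `V`
decomposes as a direct sum of a one-dimensional subspace on which `B` is positive
definite and a complement on which `B` is negative definite. -/
def IsLorentzian {V : Type*} [AddCommGroup V] [Module ℝ V] (B : V →ₗ[ℝ] V →ₗ[ℝ] ℝ) : Prop :=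
  ∃ V₁ V₂ : Submodule ℝ V, IsCompl V₁ V₂ ∧ Module.finrank ℝ V₁ = 1 ∧
    (∀ x ∈ V₁, x ≠ 0 → 0 < B x x) ∧ (∀ x ∈ V₂, x ≠ 0 → B x x < 0)

set_option maxHeartbeats 1000000 in
/-- On a Lorentzian space, the orthogonal complement of a timelike vector is
negative semidefinite. -/
lemma lorentz_perp_nonpos {V : Type*} [AddCommGroup V] [Module ℝ V]
    (B : V →ₗ[ℝ] V →ₗ[ℝ] ℝ) (hsymm : ∀ x y : V, B x y = B y x)
    (hL : IsLorentzian B) (t : V) (ht : 0 < B t t)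
    (w : V) (htw : B t w = 0) : B w w ≤ 0 := by
  by_contra hw
  push_neg at hw
  obtain ⟨V₁, V₂, hcompl, hrank, hV₁pos, hV₂neg⟩ := hL
  have hfin : Module.Finite ℝ V₁ := Module.finite_of_finrank_pos (by rw [hrank]; norm_num)
  obtain ⟨g, hg⟩ := finrank_le_one_iff.mp (le_of_eq hrank)
  obtain ⟨c₁, hc₁⟩ := hg (V₁.linearProjOfIsCompl V₂ hcompl t)
  obtain ⟨c₂, hc₂⟩ := hg (V₁.linearProjOfIsCompl V₂ hcompl w)
  have hπz : V₁.linearProjOfIsCompl V₂ hcompl (c₂ • t - c₁ • w) = 0 := by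
    rw [map_sub, map_smul, map_smul, ← hc₁, ← hc₂, smul_smul, smul_smul, mul_comm]
    exact sub_self _
  have hzV₂ : c₂ • t - c₁ • w ∈ V₂ := by
    rw [← Submodule.linearProjOfIsCompl_ker hcompl]
    exact LinearMap.mem_ker.mpr hπz
  have hwt : B w t = 0 := by rw [hsymm w t]; exact htw
  have hBzz : B (c₂ • t - c₁ • w) (c₂ • t - c₁ • w) = c₂ ^ 2 * B t t + c₁ ^ 2 * B w w := by
    simp only [map_sub, map_smul, LinearMap.sub_apply, LinearMap.smul_apply, smul_eq_mul]
    rw [htw, hwt]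
    ring
  rcases eq_or_ne (c₂ • t - c₁ • w) 0 with hz0 | hz0
  · -- then c₂ = 0, hence the projection of w is 0, so w ∈ V₂, contradiction
    have hBtz : B t (c₂ • t - c₁ • w) = 0 := by rw [hz0]; simp
    have hc₂Btt : c₂ * B t t = 0 := by
      simp only [map_sub, map_smul, smul_eq_mul] at hBtz
      rw [htw] at hBtz
      linarith
    have hc₂0 : c₂ = 0 := by
      rcases mul_eq_zero.mp hc₂Btt with h | h
      · exact h
      · exact absurd h (ne_of_gt ht)
    have hπw : V₁.linearProjOfIsCompl V₂ hcompl w = 0 := by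
      rw [← hc₂, hc₂0, zero_smul]
    have hwV₂ : w ∈ V₂ := by
      rw [← Submodule.linearProjOfIsCompl_ker hcompl]
      exact LinearMap.mem_ker.mpr hπw
    have hw0 : w ≠ 0 := by
      intro h; rw [h] at hw; simp at hw
    exact absurd (hV₂neg w hwV₂ hw0) (not_lt.mpr (le_of_lt hw))
  · have hneg := hV₂neg _ hzV₂ hz0
    rw [hBzz] at hneg
    nlinarith [sq_nonneg c₁, sq_nonneg c₂]

set_option maxHeartbeats 1000000 in
/-- Purely scalar core of the reverse Cauchy-Schwarz inequality. -/
lemma scalar_key (α β T p q r : ℝ) (hα : 0 ≤ α) (hβ : 0 ≤ β) (hT : 0 ≤ T)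
    (hp : 0 ≤ p) (hq : 0 ≤ q) (hrpq : r ^ 2 ≤ p * q)
    (hu : 0 ≤ Buu) (hv : 0 ≤ Bvv)
    (hBuu : Buu = α ^ 2 * T - p) (hBvv : Bvv = β ^ 2 * T - q)
    (hBuv : Buv = α * β * T + r) :
    Real.sqrt Buu * Real.sqrt Bvv ≤ Buv := by
  have key : ∀ a b : ℝ, 0 ≤ b → a ^ 2 ≤ b ^ 2 → a ≤ b := by
    intro a b hb h
    nlinarith [h, hb]
  obtain ⟨su, hsu, hsun, hsu2⟩ : ∃ s, Real.sqrt Buu = s ∧ 0 ≤ s ∧ s ^ 2 = Buu :=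
    ⟨Real.sqrt Buu, rfl, Real.sqrt_nonneg _, Real.sq_sqrt hu⟩
  obtain ⟨sv, hsv, hsvn, hsv2⟩ : ∃ s, Real.sqrt Bvv = s ∧ 0 ≤ s ∧ s ^ 2 = Bvv :=
    ⟨Real.sqrt Bvv, rfl, Real.sqrt_nonneg _, Real.sq_sqrt hv⟩
  obtain ⟨st, hstn, hst2⟩ : ∃ s, 0 ≤ s ∧ s ^ 2 = T :=
    ⟨Real.sqrt T, Real.sqrt_nonneg _, Real.sq_sqrt hT⟩
  obtain ⟨sp, hspn, hsp2⟩ : ∃ s, 0 ≤ s ∧ s ^ 2 = p :=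
    ⟨Real.sqrt p, Real.sqrt_nonneg _, Real.sq_sqrt hp⟩
  obtain ⟨sq', hsqn, hsq2⟩ : ∃ s, 0 ≤ s ∧ s ^ 2 = q :=
    ⟨Real.sqrt q, Real.sqrt_nonneg _, Real.sq_sqrt hq⟩
  rw [hsu, hsv, hBuv]
  have hsu2' : su ^ 2 = α ^ 2 * st ^ 2 - sp ^ 2 := by rw [hsu2, hBuu, hst2, hsp2]
  have hsv2' : sv ^ 2 = β ^ 2 * st ^ 2 - sq' ^ 2 := by rw [hsv2, hBvv, hst2, hsq2]
  have hrlow : -(sp * sq') ≤ r := by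
    have h1 : (-r) ^ 2 ≤ (sp * sq') ^ 2 := by nlinarith [hrpq, hsp2, hsq2]
    have := key (-r) (sp * sq') (mul_nonneg hspn hsqn) h1
    linarith
  have hsple : sp ≤ α * st := by
    refine key sp (α * st) (mul_nonneg hα hstn) ?_
    nlinarith [hsu2', sq_nonneg su]
  have hsqle : sq' ≤ β * st := by
    refine key sq' (β * st) (mul_nonneg hβ hstn) ?_
    nlinarith [hsv2', sq_nonneg sv]
  have hM0 : sp * sq' ≤ α * β * st ^ 2 := by
    have h2 := mul_le_mul hsple hsqle hsqn (mul_nonneg hα hstn)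
    have e : (α * st) * (β * st) = α * β * st ^ 2 := by ring
    linarith [h2, e]
  have hsq : (su * sv) ^ 2 ≤ (α * β * st ^ 2 - sp * sq') ^ 2 := by
    nlinarith [hsu2', hsv2', mul_nonneg (sq_nonneg st) (sq_nonneg (α * sq' - β * sp))]
  have hkey : su * sv ≤ α * β * st ^ 2 - sp * sq' := key (su * sv) _ (by linarith) hsq
  rw [← hst2]
  linarith

set_option maxHeartbeats 1000000 in
/-- Reverse Cauchy–Schwarz inequality on the causal future cone
`C_t⁺(V) = {x : B x x ≥ 0, B x t ≥ 0}` of a Lorentzian vector space. -/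
theorem lorentz_reverse_cauchy_schwarz {V : Type*} [AddCommGroup V] [Module ℝ V]
    (B : V →ₗ[ℝ] V →ₗ[ℝ] ℝ) (hsymm : ∀ x y : V, B x y = B y x)
    (hL : IsLorentzian B) (t : V) (ht : 0 < B t t)
    (u v : V) (hu_causal : 0 ≤ B u u) (hu_future : 0 ≤ B u t)
    (hv_causal : 0 ≤ B v v) (hv_future : 0 ≤ B v t) :
    Real.sqrt (B u u) * Real.sqrt (B v v) ≤ B u v := by
  have hperp := lorentz_perp_nonpos B hsymm hL t ht
  set T := B t t with hT
  obtain ⟨α, hαT⟩ : ∃ α : ℝ, α * T = B u t := ⟨B u t / T, div_mul_cancel₀ _ (ne_of_gt ht)⟩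
  obtain ⟨β, hβT⟩ : ∃ β : ℝ, β * T = B v t := ⟨B v t / T, div_mul_cancel₀ _ (ne_of_gt ht)⟩
  have hα0 : 0 ≤ α := by nlinarith [hαT, hu_future, ht]
  have hβ0 : 0 ≤ β := by nlinarith [hβT, hv_future, ht]
  have htu' : B t (u - α • t) = 0 := by
    simp only [map_sub, map_smul, smul_eq_mul]
    rw [hsymm t u]
    linarith [hαT]
  have htv' : B t (v - β • t) = 0 := by
    simp only [map_sub, map_smul, smul_eq_mul]
    rw [hsymm t v]
    linarith [hβT]
  set u' := u - α • t with hu'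
  set w' := v - β • t with hw'
  -- the three expansion identities
  have e1 : B u' u' = B u u - 2 * α * B u t + α ^ 2 * T := by
    simp only [hu', map_sub, map_smul, LinearMap.sub_apply, LinearMap.smul_apply, smul_eq_mul]
    rw [hsymm t u]; ring
  have e2 : B w' w' = B v v - 2 * β * B v t + β ^ 2 * T := by
    simp only [hw', map_sub, map_smul, LinearMap.sub_apply, LinearMap.smul_apply, smul_eq_mul]
    rw [hsymm t v]; ring
  have e3 : B u' w' = B u v - β * B u t - α * B v t + α * β * T := by
    simp only [hu', hw', map_sub, map_smul, LinearMap.sub_apply, LinearMap.smul_apply,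
      smul_eq_mul]
    rw [hsymm t v]; ring
  set p := -(B u' u') with hp
  set q := -(B w' w') with hq
  set r := B u' w' with hr
  have hp0 : 0 ≤ p := by have := hperp u' htu'; rw [hp]; linarith
  have hq0 : 0 ≤ q := by have := hperp w' htv'; rw [hq]; linarith
  have hBuu : B u u = α ^ 2 * T - p := by
    rw [hp, e1]; linear_combination (-2 * α) * hαT
  have hBvv : B v v = β ^ 2 * T - q := by
    rw [hq, e2]; linear_combination (-2 * β) * hβT
  have hBuv : B u v = α * β * T + r := by
    linear_combination -e3 - β * hαT - α * hβT
  -- Cauchy–Schwarz on the perp space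
  have hrpq : r ^ 2 ≤ p * q := by
    have hforall : ∀ s : ℝ, 0 ≤ q * (s * s) + (-(2 * r)) * s + p := by
      intro s
      have hts : B t (u' + s • w') = 0 := by
        simp only [map_add, map_smul, smul_eq_mul]
        rw [htu', htv']; ring
      have hle := hperp (u' + s • w') hts
      simp only [map_add, map_smul, LinearMap.add_apply, LinearMap.smul_apply,
        smul_eq_mul] at hle
      rw [hsymm w' u'] at hle
      rw [hp, hq, hr]
      ring_nf
      ring_nf at hle
      linarith
    have hd := discrim_le_zero hforall
    rw [discrim] at hd
    nlinarith [hd]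
  exact scalar_key α β T p q r hα0 hβ0 (le_of_lt ht) hp0 hq0 hrpq
    (hBuu ▸ hu_causal) (hBvv ▸ hv_causal) hBuu hBvv hBuv
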